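/- Let (M,ρ) be a complete metric space, let f : M → ℝ ∪ {+∞} be proper, lower semicontinuous and bounded below, and let g : M → ℝ be continuous with |∇̃f|(x) ≥ |∇̃g|(x) for every x ∈ dom f with |∇̃f|(x) < ∞. Then for each ε > 0, each x₀ ∈ M and each r ∈ (0,1) there exists x ∈ ε-Crit f such that f(x) ≤ f(x₀) - ε·ρ(x, x₀) and f(x₀) - r·g(x₀) ≥ f(x) - r·g(x). -/

import Mathlib

open Filter Topology ENNReal

/-- The positive part `[x]⁺` of an extended real, as an element of `ℝ≥0∞`. -/
noncomputable def erealPos (x : EReal) : ℝ≥0∞ := if x = ⊤ then ⊤ else ENNReal.ofReal x.toReal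

/-- The global slope `|∇̃ f|(x) = sup_{y ≠ x} [f x - f y]⁺ / ρ(x,y)` of `f : M → ℝ ∪ {+∞}`. -/
noncomputable def globalSlope {M : Type*} [MetricSpace M] (f : M → EReal) (x : M) : ℝ≥0∞ :=
  ⨆ y ∈ {y : M | y ≠ x}, erealPos (f x - f y) / edist x y

/-- The local slope `|∇ f|(x) = limsup_{y → x, y ≠ x} [f x - f y]⁺ / ρ(x,y)`. -/
noncomputable def localSlope {M : Type*} [MetricSpace M] (f : M → EReal) (x : M) : ℝ≥0∞ :=
  Filter.limsup (fun y => erealPos (f x - f y) / edist x y) (𝓝[≠] x)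

/-- `ε`-global-critical points: `x ∈ dom f` with `f y ≥ f x - ε·ρ(y,x)` for all `y`. -/
def epsCrit {M : Type*} [MetricSpace M] (ε : ℝ) (f : M → EReal) : Set M :=
  {x | f x ≠ ⊤ ∧ ∀ y, f x - ↑(ε * dist y x) ≤ f y}

namespace SlopeProofAux

variable {M : Type*} [MetricSpace M]

lemma ereal_sub_le_iff {A c : ℝ} {B : EReal} (hB : B ≠ ⊥) :
    (A : EReal) - B ≤ (c : EReal) ↔ (A : EReal) - (c : EReal) ≤ B := by
  induction B with
  | bot => simp at hB
  | coe b =>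
      rw [← EReal.coe_sub, ← EReal.coe_sub, EReal.coe_le_coe_iff, EReal.coe_le_coe_iff]
      constructor <;> intro <;> linarith
  | top => simp

lemma globalSlope_le_of_forall {f : M → EReal} {x : M} {L : ℝ} (hL : 0 ≤ L)
    (h : ∀ y, f x - f y ≤ ((L * dist x y : ℝ) : EReal)) :
    globalSlope f x ≤ ENNReal.ofReal L := by
  refine iSup₂_le fun y hy => ?_
  have hyx : y ≠ x := hy
  have hd : 0 < dist x y := dist_pos.2 (Ne.symm hyx)
  rw [edist_dist, ENNReal.div_le_iff (by simpa using (ENNReal.ofReal_pos.2 hd).ne')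
    ENNReal.ofReal_ne_top, ← ENNReal.ofReal_mul hL]
  have hy2 := h y
  have ht : f x - f y ≠ ⊤ := by
    intro hT; rw [hT] at hy2; exact EReal.coe_ne_top _ (top_le_iff.mp hy2)
  unfold erealPos
  rw [if_neg ht]
  apply ENNReal.ofReal_le_ofReal
  by_cases hb : f x - f y = ⊥
  · rw [hb]; simp; positivity
  · have := EReal.toReal_le_toReal hy2 hb (EReal.coe_ne_top _)
    rwa [EReal.toReal_coe] at this

lemma sub_le_of_globalSlope_le {f : M → EReal} {x : M} {L : ℝ} (hL : 0 ≤ L)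
    (h : globalSlope f x ≤ ENNReal.ofReal L) (hx : f x ≠ ⊤) (hxb : f x ≠ ⊥) (y : M) :
    f x - f y ≤ ((L * dist x y : ℝ) : EReal) := by
  rcases eq_or_ne y x with rfl | hy
  · rw [← EReal.coe_toReal hx hxb, ← EReal.coe_sub]
    simp
  · have hterm : erealPos (f x - f y) / edist x y ≤ ENNReal.ofReal L := by
      refine le_trans ?_ h
      exact le_iSup₂ (f := fun (y : M) (_ : y ∈ {y : M | y ≠ x}) => erealPos (f x - f y) / edist x y) y hy
    have hd : 0 < dist x y := dist_pos.2 (Ne.symm hy)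
    rw [edist_dist, ENNReal.div_le_iff (by simpa using (ENNReal.ofReal_pos.2 hd).ne')
      ENNReal.ofReal_ne_top, ← ENNReal.ofReal_mul hL] at hterm
    have hLd : (0:ℝ) ≤ L * dist x y := by positivity
    have ht : f x - f y ≠ ⊤ := by
      intro hT
      rw [hT] at hterm
      unfold erealPos at hterm
      rw [if_pos rfl] at hterm
      exact (ENNReal.ofReal_ne_top (le_antisymm hterm le_top).symm)
    unfold erealPos at hterm
    rw [if_neg ht] at hterm
    by_cases hb : f x - f y = ⊥
    · rw [hb]; exact bot_le
    · rcases le_or_gt (f x - f y) 0 with h0 | h0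
      · exact le_trans h0 (by exact_mod_cast hLd)
      · have := (ENNReal.ofReal_le_ofReal_iff hLd).mp hterm
        calc f x - f y = ((f x - f y).toReal : EReal) := (EReal.coe_toReal ht hb).symm
          _ ≤ _ := by exact_mod_cast this
/-- Minimal point lemma (Ekeland-type chain argument with an auxiliary functional). -/
lemma exists_minimal_point [CompleteSpace M] (f : M → EReal) (hlsc : LowerSemicontinuous f)
    {C : ℝ} (hC : ∀ x, (C : EReal) ≤ f x)
    {ε : ℝ} (hε : 0 < ε) (G : M → ℝ) (hG : Continuous G) (ρ : ℝ)
    (x₀ : M) (hx₀ : f x₀ ≠ ⊤) :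
    ∃ x, f x ≠ ⊤ ∧
      ((f x).toReal + ε * dist x x₀ ≤ (f x₀).toReal ∧
       (f x).toReal - ρ * G x ≤ (f x₀).toReal - ρ * G x₀) ∧
      ∀ z, f z ≠ ⊤ →
        ((f z).toReal + ε * dist z x ≤ (f x).toReal ∧
         (f z).toReal - ρ * G z ≤ (f x).toReal - ρ * G x) → z = x := by
  classical
  set F : M → ℝ := fun z => (f z).toReal with hF
  have hbot : ∀ z, f z ≠ ⊥ := fun z h => by
    have := hC z; rw [h] at this; exact EReal.coe_ne_bot C (le_antisymm (le_of_le_of_eq this rfl) bot_le)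
  have hcoe : ∀ z, f z ≠ ⊤ → f z = ((F z : ℝ) : EReal) := fun z hz => (EReal.coe_toReal hz (hbot z)).symm
  have hCF : ∀ z, f z ≠ ⊤ → C ≤ F z := by
    intro z hz
    have h1 := hC z
    rw [hcoe z hz] at h1
    exact_mod_cast h1
  -- the order relation, in real form
  set P : M → M → Prop := fun z x => f z ≠ ⊤ ∧ F z + ε * dist z x ≤ F x ∧
      F z - ρ * G z ≤ F x - ρ * G x with hP
  have hPrefl : ∀ x, f x ≠ ⊤ → P x x := by
    intro x hx; refine ⟨hx, by simp, le_refl _⟩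
  have hPtrans : ∀ {z y x}, P z y → P y x → P z x := by
    rintro z y x ⟨hz, h1, h2⟩ ⟨hy, h3, h4⟩
    refine ⟨hz, ?_, by linarith⟩
    have := dist_triangle z y x
    nlinarith [hε.le]
  -- the chain
  have hbddS : ∀ x : M, BddBelow (F '' {w | P w x}) := by
    intro x
    refine ⟨C, ?_⟩
    rintro v ⟨w, hw, rfl⟩
    exact hCF w hw.1
  have step : ∀ (k : ℕ) (x : {x : M // f x ≠ ⊤}),
      ∃ z : {x : M // f x ≠ ⊤}, P z.1 x.1 ∧
        F z.1 ≤ sInf (F '' {w | P w x.1}) + (1/2)^k := by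
    intro k x
    have hne : (F '' {w | P w x.1}).Nonempty := ⟨F x.1, x.1, hPrefl x.1 x.2, rfl⟩
    have hlt : sInf (F '' {w | P w x.1}) < sInf (F '' {w | P w x.1}) + (1/2)^k := by
      have : (0:ℝ) < (1/2)^k := by positivity
      linarith
    obtain ⟨v, ⟨w, hw, rfl⟩, hv⟩ := (csInf_lt_iff (hbddS x.1) hne).mp hlt
    exact ⟨⟨w, hw.1⟩, hw, hv.le⟩
  set seq : ℕ → {x : M // f x ≠ ⊤} :=
    fun k => Nat.rec ⟨x₀, hx₀⟩ (fun k x => Classical.choose (step k x)) k with hseqdef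
  have hseq : ∀ k, P (seq (k+1)).1 (seq k).1 ∧
      F (seq (k+1)).1 ≤ sInf (F '' {w | P w (seq k).1}) + (1/2)^k :=
    fun k => Classical.choose_spec (step k (seq k))
  have hchain : ∀ k m, k ≤ m → P (seq m).1 (seq k).1 := by
    intro k m hkm
    induction m with
    | zero => have : k = 0 := Nat.le_zero.mp hkm; subst this; exact hPrefl _ (seq 0).2
    | succ n ih =>
        rcases Nat.lt_or_ge k (n+1) with h | h
        · exact hPtrans (hseq n).1 (ih (Nat.lt_succ_iff.mp h))
        · have : k = n + 1 := le_antisymm hkm h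
          subst this; exact hPrefl _ (seq (n+1)).2
  have hFanti : ∀ k m, k ≤ m → F (seq m).1 ≤ F (seq k).1 := by
    intro k m hkm
    have := (hchain k m hkm).2.1
    nlinarith [dist_nonneg (x := (seq m).1) (y := (seq k).1), hε.le]
  have hFbdd : BddBelow (Set.range fun k => F (seq k).1) := by
    refine ⟨C, ?_⟩; rintro v ⟨k, rfl⟩; exact hCF _ (seq k).2
  set LF : ℝ := ⨅ k, F (seq k).1 with hLF
  have hFtend : Tendsto (fun k => F (seq k).1) atTop (𝓝 LF) :=
    tendsto_atTop_ciInf (fun a b hab => hFanti a b hab) hFbdd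
  have hLFle : ∀ k, LF ≤ F (seq k).1 := fun k => ciInf_le hFbdd k
  -- Cauchy
  have hdistF : ∀ k m, k ≤ m → ε * dist (seq m).1 (seq k).1 ≤ F (seq k).1 - F (seq m).1 := by
    intro k m hkm; have := (hchain k m hkm).2.1; linarith
  have hcauchy : CauchySeq (fun k => (seq k).1) := by
    rw [Metric.cauchySeq_iff']
    intro δ hδ
    obtain ⟨N, hN⟩ := (Metric.tendsto_atTop.mp hFtend) (ε * δ / 2) (by positivity)
    refine ⟨N, fun n hn => ?_⟩
    have h1 := hdistF N n hn
    have h2 := hN N le_rfl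
    have h3 := hN n hn
    rw [Real.dist_eq] at h2 h3
    have h4 : F (seq N).1 - F (seq n).1 < ε * δ := by
      have h5 := abs_lt.mp h2
      have h6 := abs_lt.mp h3
      linarith
    have hd : ε * dist (seq n).1 (seq N).1 < ε * δ := lt_of_le_of_lt h1 h4
    exact lt_of_mul_lt_mul_left hd hε.le
  obtain ⟨xb, hxb⟩ := cauchySeq_tendsto_of_complete hcauchy
  -- CLAIM 1 : f xb ≤ F (seq k) - ε * dist xb (seq k)
  have claim1 : ∀ k, f xb ≤ ((F (seq k).1 - ε * dist xb (seq k).1 : ℝ) : EReal) := by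
    intro k
    by_contra hcon
    push_neg at hcon
    set b : ℝ := F (seq k).1 - ε * dist xb (seq k).1 with hb
    obtain ⟨c, hbc, hcf⟩ := exists_between hcon
    have hcT : c ≠ ⊤ := (lt_of_lt_of_le hcf le_top).ne
    have hcB : c ≠ ⊥ := (lt_of_le_of_lt bot_le hbc).ne'
    set cr : ℝ := c.toReal with hcr
    have hcc : c = ((cr : ℝ) : EReal) := (EReal.coe_toReal hcT hcB).symm
    have hbcr : b < cr := by rw [hcc] at hbc; exact_mod_cast hbc
    have hev : ∀ᶠ w in 𝓝 xb, c < f w := hlsc xb c hcf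
    obtain ⟨δ, hδ, hball⟩ := Metric.eventually_nhds_iff.mp hev
    -- choose m ≥ k with dist (seq m) xb < min δ ((cr - b)/ε)
    obtain ⟨N, hN⟩ := (Metric.tendsto_atTop.mp hxb) (min δ ((cr - b)/ε)) (by
      apply lt_min hδ; have : cr - b > 0 := by linarith
      positivity)
    set m : ℕ := max N k with hm
    have hmN : N ≤ m := le_max_left _ _
    have hmk : k ≤ m := le_max_right _ _
    have hdm := hN m hmN
    have hclose : dist (seq m).1 xb < δ := lt_of_lt_of_le hdm (min_le_left _ _)
    have hclose2 : dist (seq m).1 xb < (cr - b)/ε := lt_of_lt_of_le hdm (min_le_right _ _)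
    have hfm : c < f (seq m).1 := hball hclose
    have hfm2 : cr < F (seq m).1 := by
      rw [hcc, hcoe _ (seq m).2] at hfm; exact_mod_cast hfm
    have hup := (hchain k m hmk).2.1
    have htri : dist xb (seq k).1 ≤ dist xb (seq m).1 + dist (seq m).1 (seq k).1 :=
      dist_triangle _ _ _
    have hrw : dist xb (seq m).1 = dist (seq m).1 xb := dist_comm _ _
    -- F (seq m) ≤ F k - ε d(m,k) ≤ b + ε d(m, xb) < b + (cr - b) = cr
    have : F (seq m).1 ≤ b + ε * dist (seq m).1 xb := by
      rw [hb]; rw [hrw] at htri; nlinarith [hε.le]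
    have hεd : ε * dist (seq m).1 xb < cr - b := by
      rw [lt_div_iff₀ hε] at hclose2; linarith
    linarith
  have hxbT : f xb ≠ ⊤ := by
    intro hT
    have := claim1 0
    rw [hT] at this
    exact EReal.coe_ne_top _ (top_le_iff.mp this)
  have hFxb : ∀ k, F xb + ε * dist xb (seq k).1 ≤ F (seq k).1 := by
    intro k
    have := claim1 k
    rw [hcoe xb hxbT] at this
    have h2 : F xb ≤ F (seq k).1 - ε * dist xb (seq k).1 := by exact_mod_cast this
    linarith
  have hFxbLF : F xb ≤ LF := by
    refine ge_of_tendsto hFtend (Eventually.of_forall fun k => ?_)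
    have := hFxb k
    nlinarith [dist_nonneg (x := xb) (y := (seq k).1), hε.le]
  have hGtend : Tendsto (fun m => G (seq m).1) atTop (𝓝 (G xb)) :=
    (hG.continuousAt.tendsto).comp hxb
  have hcomp2 : ∀ k, F xb - ρ * G xb ≤ F (seq k).1 - ρ * G (seq k).1 := by
    intro k
    have htt : Tendsto (fun m => F (seq m).1 - ρ * G (seq m).1) atTop (𝓝 (LF - ρ * G xb)) :=
      hFtend.sub (hGtend.const_mul ρ)
    have hle : ∀ᶠ m in atTop, F (seq m).1 - ρ * G (seq m).1 ≤ F (seq k).1 - ρ * G (seq k).1 :=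
      eventually_atTop.2 ⟨k, fun m hm => (hchain k m hm).2.2⟩
    have := le_of_tendsto htt hle
    linarith [hFxbLF]
  have hPxb : ∀ k, P xb (seq k).1 := fun k => ⟨hxbT, hFxb k, hcomp2 k⟩
  refine ⟨xb, hxbT, ⟨?_, ?_⟩, ?_⟩
  · exact hFxb 0
  · exact hcomp2 0
  · intro z hz hrel
    have hPz : P z xb := ⟨hz, hrel.1, hrel.2⟩
    have hPzk : ∀ k, P z (seq k).1 := fun k => hPtrans hPz (hPxb k)
    have hFz : ∀ k, F xb ≤ F z + (1/2)^k := by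
      intro k
      have h1 : F z ∈ F '' {w | P w (seq k).1} := ⟨z, hPzk k, rfl⟩
      have h2 : sInf (F '' {w | P w (seq k).1}) ≤ F z := csInf_le (hbddS _) h1
      have h3 := (hseq k).2
      have h4 := hFxb (k+1)
      nlinarith [dist_nonneg (x := xb) (y := (seq (k+1)).1), hε.le]
    have hFzxb : F xb ≤ F z := by
      have h2 : Tendsto (fun k : ℕ => F z + (1/2:ℝ)^k) atTop (𝓝 (F z)) := by
        have := (_root_.tendsto_pow_atTop_nhds_zero_of_lt_one
          (by norm_num : (0:ℝ) ≤ 1/2) (by norm_num : (1/2:ℝ) < 1))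
        simpa using tendsto_const_nhds.add this
      exact ge_of_tendsto h2 (Eventually.of_forall hFz)
    have h5 := hrel.1
    have hd : dist z xb ≤ 0 := by nlinarith [hε]
    exact dist_le_zero.mp hd

lemma core [CompleteSpace M] (f : M → EReal) (hlsc : LowerSemicontinuous f)
    {C : ℝ} (hC : ∀ x, (C : EReal) ≤ f x)
    {ε : ℝ} (hε : 0 < ε) {ρ : ℝ} (hρ0 : 0 < ρ) (hρ1 : ρ < 1)
    {N : ℝ} (hN : ε ≤ N)
    (GN : M → ℝ) (hGN : Continuous GN)
    (hLip : ∀ x y, GN x - GN y ≤ N * dist x y)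
    (key : ∀ x, f x ≠ ⊤ → ∀ Λ : ℝ, 0 ≤ Λ → Λ ≤ N → globalSlope f x ≤ ENNReal.ofReal Λ →
      ∀ y, GN x - GN y ≤ Λ * dist x y)
    (x₀ : M) (hx₀ : f x₀ ≠ ⊤) :
    ∃ x, x ∈ epsCrit ε f ∧
      (f x).toReal + ε * dist x x₀ ≤ (f x₀).toReal ∧
      (f x).toReal - ρ * GN x ≤ (f x₀).toReal - ρ * GN x₀ := by
  have hbot : ∀ z, f z ≠ ⊥ := fun z h => by
    have := hC z; rw [h] at this
    exact EReal.coe_ne_bot C (le_antisymm (le_of_le_of_eq this rfl) bot_le)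
  have hcoe : ∀ z, f z ≠ ⊤ → f z = (((f z).toReal : ℝ) : EReal) :=
    fun z hz => (EReal.coe_toReal hz (hbot z)).symm
  obtain ⟨xb, hxbT, hrel, hmin⟩ := exists_minimal_point f hlsc hC hε GN hGN ρ x₀ hx₀
  set A : ℝ := (f xb).toReal with hA
  -- generic "pass"
  have pass : ∀ Λ' : ℝ, 0 ≤ Λ' → (∀ y, GN xb - GN y ≤ Λ' * dist xb y) →
      globalSlope f xb ≤ ENNReal.ofReal (max ε (ρ * Λ')) := by
    intro Λ' hΛ'0 hdrop
    have hK0 : (0:ℝ) ≤ max ε (ρ * Λ') := le_trans hε.le (le_max_left _ _)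
    apply globalSlope_le_of_forall hK0
    intro y
    by_cases hyT : f y = ⊤
    · rw [hyT, hcoe xb hxbT]
      simp
    · rcases eq_or_ne y xb with rfl | hy
      · rw [hcoe y hyT, ← EReal.coe_sub]
        simp
      · set Bv : ℝ := (f y).toReal with hBv
        rw [hcoe xb hxbT, hcoe y hyT, ← EReal.coe_sub, EReal.coe_le_coe_iff]
        rcases le_or_gt (Bv + ε * dist y xb) A with hle | hgt
        · have hns : ¬(Bv - ρ * GN y ≤ A - ρ * GN xb) := by
            intro hcon
            exact hy (hmin y hyT ⟨hle, hcon⟩)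
          push_neg at hns
          have h1 : A - Bv < ρ * (GN xb - GN y) := by linarith
          have h2 : GN xb - GN y ≤ Λ' * dist xb y := hdrop y
          have h3 : ρ * (GN xb - GN y) ≤ ρ * (Λ' * dist xb y) :=
            mul_le_mul_of_nonneg_left h2 hρ0.le
          have h4 : (ρ * Λ') * dist xb y ≤ max ε (ρ * Λ') * dist xb y :=
            mul_le_mul_of_nonneg_right (le_max_right _ _) dist_nonneg
          nlinarith
        · have h1 : A - Bv < ε * dist y xb := by linarith
          rw [dist_comm y xb] at h1
          have h4 : ε * dist xb y ≤ max ε (ρ * Λ') * dist xb y :=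
            mul_le_mul_of_nonneg_right (le_max_left _ _) dist_nonneg
          linarith
  have s1 := pass N (le_trans hε.le hN) (fun y => hLip xb y)
  have hSne : globalSlope f xb ≠ ⊤ :=
    (lt_of_le_of_lt s1 ENNReal.ofReal_lt_top).ne
  set Λ : ℝ := (globalSlope f xb).toReal with hΛ
  have hSΛ : globalSlope f xb = ENNReal.ofReal Λ := (ENNReal.ofReal_toReal hSne).symm
  have hΛ0 : 0 ≤ Λ := ENNReal.toReal_nonneg
  have hΛle : Λ ≤ max ε (ρ * N) :=
    ENNReal.toReal_le_of_le_ofReal (le_trans hε.le (le_max_left _ _)) s1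
  have hΛN : Λ ≤ N := by
    refine le_trans hΛle (max_le hN ?_)
    nlinarith
  have hkey := key xb hxbT Λ hΛ0 hΛN hSΛ.le
  have s2 := pass Λ hΛ0 hkey
  have hΛ2 : Λ ≤ max ε (ρ * Λ) :=
    ENNReal.toReal_le_of_le_ofReal (le_trans hε.le (le_max_left _ _)) s2
  have hΛε : Λ ≤ ε := by
    rcases le_max_iff.mp hΛ2 with h | h
    · exact h
    · nlinarith
  have sfinal : globalSlope f xb ≤ ENNReal.ofReal ε := by
    rw [hSΛ]; exact ENNReal.ofReal_le_ofReal hΛε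
  refine ⟨xb, ⟨hxbT, fun y => ?_⟩, hrel.1, hrel.2⟩
  have h := sub_le_of_globalSlope_le hε.le sfinal hxbT (hbot xb) y
  rw [hcoe xb hxbT] at h ⊢
  rw [dist_comm y xb]
  exact (ereal_sub_le_iff (hbot y)).mp h

noncomputable def infConv [Nonempty M] (g : M → ℝ) (N : ℝ) (x : M) : ℝ :=
  ⨅ y, (g y + N * dist x y)

section InfConv
variable [Nonempty M] {g : M → ℝ} {N : ℝ}

lemma infConv_le (hb : ∀ x, BddBelow (Set.range fun y => g y + N * dist x y))
    (x : M) : infConv g N x ≤ g x := by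
  have := ciInf_le (hb x) x
  simpa [infConv] using this

lemma infConv_lip (hb : ∀ x, BddBelow (Set.range fun y => g y + N * dist x y))
    (hN : 0 ≤ N) (x z : M) : infConv g N x - infConv g N z ≤ N * dist x z := by
  have h1 : ∀ y, infConv g N x - N * dist x z ≤ g y + N * dist z y := by
    intro y
    have h2 : infConv g N x ≤ g y + N * dist x y := ciInf_le (hb x) y
    have h3 : dist x y ≤ dist x z + dist z y := dist_triangle x z y
    nlinarith
  have h4 : infConv g N x - N * dist x z ≤ infConv g N z := le_ciInf h1
  linarith

lemma infConv_drop (hb : ∀ x, BddBelow (Set.range fun y => g y + N * dist x y))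
    {x : M} {Λ : ℝ} (hΛ0 : 0 ≤ Λ) (hΛN : Λ ≤ N) (hΛ : ∀ y, g x - g y ≤ Λ * dist x y) (z : M) :
    infConv g N x - infConv g N z ≤ Λ * dist x z := by
  have h1 : ∀ y, infConv g N x - Λ * dist x z ≤ g y + N * dist z y := by
    intro y
    have h2 : infConv g N x ≤ g x := infConv_le hb x
    have h3 : g x - g y ≤ Λ * dist x y := hΛ y
    have h4 : dist x y ≤ dist x z + dist z y := dist_triangle x z y
    have h5 : Λ * dist x y ≤ Λ * dist x z + N * dist z y := by
      nlinarith [dist_nonneg (x := z) (y := y)]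
    linarith
  have h4 : infConv g N x - Λ * dist x z ≤ infConv g N z := le_ciInf h1
  linarith

lemma infConv_cont (hb : ∀ x, BddBelow (Set.range fun y => g y + N * dist x y))
    (hN : 0 ≤ N) : Continuous (infConv g N) := by
  refine (LipschitzWith.of_dist_le_mul (K := N.toNNReal) fun x y => ?_).continuous
  rw [Real.dist_eq, Real.coe_toNNReal N hN]
  rw [abs_le]
  constructor
  · have := infConv_lip hb hN y x
    rw [dist_comm y x] at this
    linarith
  · exact infConv_lip hb hN x y

end InfConv

end SlopeProofAux

open SlopeProofAux in
set_option maxHeartbeats 1000000 in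
/-- for `f` proper lsc bounded below on a complete metric space and `g : M → ℝ`
continuous with `|∇̃f| ≥ |∇̃g|` on `dom |∇̃f|`, for each `ε > 0`, `x₀ ∈ M` and `r ∈ (0,1)`
there is `x ∈ ε-Crit f` with `f(x) ≤ f(x₀) - ε·ρ(x,x₀)` and
`f(x₀) - r·g(x₀) ≥ f(x) - r·g(x)`. -/
theorem exists_epsCrit_r_global_slope {M : Type*} [MetricSpace M] [CompleteSpace M]
    (f : M → EReal) (g : M → ℝ)
    (hproper : ∃ x, f x ≠ ⊤) (hlsc : LowerSemicontinuous f)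
    (hbdd : ∃ C : ℝ, ∀ x, (C : EReal) ≤ f x) (hg : Continuous g)
    (hslope : ∀ x, f x ≠ ⊤ → globalSlope f x < ⊤ →
      globalSlope (fun y => (g y : EReal)) x ≤ globalSlope f x) :
    ∀ ε : ℝ, 0 < ε → ∀ x₀ : M, ∀ r : ℝ, 0 < r → r < 1 →
      ∃ x ∈ epsCrit ε f,
        f x ≤ f x₀ - ↑(ε * dist x x₀) ∧ f x - ↑(r * g x) ≤ f x₀ - ↑(r * g x₀) := by
  intro ε hε x₀ r hr0 hr1
  obtain ⟨xp, hxp⟩ := hproper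
  obtain ⟨C, hC⟩ := hbdd
  have hNM : Nonempty M := ⟨x₀⟩
  have hbot : ∀ z, f z ≠ ⊥ := fun z h => by
    have := hC z; rw [h] at this
    exact EReal.coe_ne_bot C (le_antisymm (le_of_le_of_eq this rfl) bot_le)
  have hcoe : ∀ z, f z ≠ ⊤ → f z = (((f z).toReal : ℝ) : EReal) :=
    fun z hz => (EReal.coe_toReal hz (hbot z)).symm
  -- Ekeland
  have ekeland : ∀ x₁ : M, f x₁ ≠ ⊤ → ∃ x, x ∈ epsCrit ε f ∧
      (f x).toReal + ε * dist x x₁ ≤ (f x₁).toReal := by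
    intro x₁ hx₁
    obtain ⟨xb, hxbT, hrel, hmin⟩ :=
      exists_minimal_point f hlsc hC hε (fun _ => 0) continuous_const 0 x₁ hx₁
    refine ⟨xb, ⟨hxbT, fun y => ?_⟩, hrel.1⟩
    by_cases hyT : f y = ⊤
    · rw [hyT]; exact le_top
    · rcases eq_or_ne y xb with rfl | hy
      · rw [dist_self, mul_zero]
        simp
      · have hns : ¬((f y).toReal + ε * dist y xb ≤ (f xb).toReal) := by
          intro hcon
          refine hy (hmin y hyT ⟨hcon, ?_⟩)
          have := dist_nonneg (x := y) (y := xb)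
          nlinarith
        push_neg at hns
        rw [hcoe xb hxbT, hcoe y hyT, ← EReal.coe_sub, EReal.coe_le_coe_iff]
        linarith
  obtain ⟨xc, hxc_crit, _⟩ := ekeland xp hxp
  have hxcT : f xc ≠ ⊤ := hxc_crit.1
  -- slope of f at xc ≤ ε, hence slope of g at xc ≤ ε, hence a global linear minorant of g
  have hslope_xc : globalSlope f xc ≤ ENNReal.ofReal ε := by
    apply globalSlope_le_of_forall hε.le
    intro y
    have h := hxc_crit.2 y
    rw [hcoe xc hxcT] at h ⊢
    rw [dist_comm y xc] at h
    exact (ereal_sub_le_iff (hbot y)).mpr h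
  have hgs := hslope xc hxcT (lt_of_le_of_lt hslope_xc ENNReal.ofReal_lt_top)
  have hgd : ∀ y, g xc - g y ≤ ε * dist xc y := by
    intro y
    have h := sub_le_of_globalSlope_le hε.le (le_trans hgs hslope_xc)
      (EReal.coe_ne_top (g xc)) (EReal.coe_ne_bot (g xc)) y
    rw [← EReal.coe_sub] at h
    exact_mod_cast h
  have hpin : ∀ y, g xc - ε * dist xc y ≤ g y := fun y => by linarith [hgd y]
  -- trivial case : f x₀ = ⊤
  by_cases hx₀T : f x₀ = ⊤
  · refine ⟨xc, hxc_crit, ?_, ?_⟩ <;> rw [hx₀T, EReal.top_sub_coe] <;> exact le_top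
  -- trivial case : x₀ already critical
  by_cases hx₀crit : x₀ ∈ epsCrit ε f
  · refine ⟨x₀, hx₀crit, ?_, le_refl _⟩
    rw [dist_self, mul_zero]
    simp
  -- main case
  have hwex : ∃ w, ¬(f x₀ - ↑(ε * dist w x₀) ≤ f w) := by
    by_contra hcon
    push_neg at hcon
    exact hx₀crit ⟨hx₀T, fun y => hcon y⟩
  obtain ⟨w, hw⟩ := hwex
  push_neg at hw
  have hwT : f w ≠ ⊤ := by
    intro h; rw [h] at hw; exact not_top_lt hw
  set A0 : ℝ := (f x₀).toReal with hA0
  set Aw : ℝ := (f w).toReal with hAw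
  have hwR : Aw < A0 - ε * dist w x₀ := by
    rw [hcoe w hwT, hcoe x₀ hx₀T, ← EReal.coe_sub] at hw
    exact_mod_cast hw
  set κ : ℝ := A0 - ε * dist w x₀ - Aw with hκ
  have hκ0 : 0 < κ := by simp only [hκ]; linarith
  set ρ : ℝ := (1 + r) / 2 with hρ
  have hρ0 : 0 < ρ := by simp only [hρ]; linarith
  have hρ1 : ρ < 1 := by simp only [hρ]; linarith
  have hrρ : r < ρ := by simp only [hρ]; linarith
  set η : ℝ := κ * (ρ - r) / (4 * r * ρ) with hη
  have hη0 : 0 < η := by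
    apply div_pos
    · exact mul_pos hκ0 (by linarith)
    · positivity
  -- continuity of g at x₀
  obtain ⟨δ, hδ0, hδ⟩ := Metric.continuousAt_iff.mp (hg.continuousAt (x := x₀)) η hη0
  set N : ℝ := max (ε + 1) (ε + (g x₀ - g xc + ε * dist xc x₀) / δ) with hNdef
  have hNε : ε ≤ N := le_trans (by linarith) (le_max_left _ _)
  have hN0 : 0 ≤ N := le_trans hε.le hNε
  set GN : M → ℝ := infConv g N with hGNdef
  have hbddG : ∀ x, BddBelow (Set.range fun y => g y + N * dist x y) := by
    intro x
    refine ⟨g xc - ε * dist xc x, ?_⟩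
    rintro v ⟨y, rfl⟩
    show g xc - ε * dist xc x ≤ g y + N * dist x y
    have h1 := hpin y
    have h2 : dist xc y ≤ dist xc x + dist x y := dist_triangle xc x y
    have h3 : (0:ℝ) ≤ dist x y := dist_nonneg
    nlinarith [mul_nonneg (sub_nonneg.mpr hNε) h3, mul_le_mul_of_nonneg_left h2 hε.le]
  have hGN_le : ∀ x, GN x ≤ g x := infConv_le hbddG
  have hGN_lip : ∀ x y, GN x - GN y ≤ N * dist x y := infConv_lip hbddG hN0
  have hGN_cont : Continuous GN := infConv_cont hbddG hN0
  have hGN_x₀ : g x₀ - η ≤ GN x₀ := by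
    refine le_ciInf fun y => ?_
    rcases lt_or_ge (dist y x₀) δ with hyd | hyd
    · have := hδ hyd
      rw [Real.dist_eq, abs_lt] at this
      have h3 : 0 ≤ N * dist x₀ y := mul_nonneg hN0 dist_nonneg
      linarith
    · have h1 := hpin y
      have h2 : dist xc y ≤ dist xc x₀ + dist x₀ y := dist_triangle xc x₀ y
      have h4 : (N - ε) * δ ≤ (N - ε) * dist x₀ y := by
        rw [dist_comm x₀ y]
        nlinarith
      have h5 : (g x₀ - g xc + ε * dist xc x₀) / δ ≤ N - ε := by
        have := le_max_right (ε + 1) (ε + (g x₀ - g xc + ε * dist xc x₀) / δ)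
        simp only [hNdef] at *
        linarith [this]
      have h6 : g x₀ - g xc + ε * dist xc x₀ ≤ (N - ε) * δ := by
        rw [div_le_iff₀ hδ0] at h5
        linarith
      nlinarith
  -- key hypothesis for `core`
  have key : ∀ x, f x ≠ ⊤ → ∀ Λ : ℝ, 0 ≤ Λ → Λ ≤ N →
      globalSlope f x ≤ ENNReal.ofReal Λ → ∀ y, GN x - GN y ≤ Λ * dist x y := by
    intro x hxT Λ hΛ0 hΛN hs y
    have hgs2 := hslope x hxT (lt_of_le_of_lt hs ENNReal.ofReal_lt_top)
    have hgd2 : ∀ z, g x - g z ≤ Λ * dist x z := by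
      intro z
      have h := sub_le_of_globalSlope_le hΛ0 (le_trans hgs2 hs)
        (EReal.coe_ne_top (g x)) (EReal.coe_ne_bot (g x)) z
      rw [← EReal.coe_sub] at h
      exact_mod_cast h
    exact infConv_drop hbddG hΛ0 hΛN hgd2 y
  obtain ⟨xh, hxh_crit, h1, h2⟩ :=
    core f hlsc hC hε hρ0 hρ1 hNε GN hGN_cont hGN_lip key x₀ hx₀T
  set Ax : ℝ := (f xh).toReal with hAx
  have hsucc : r * (g x₀ - g xh) ≤ A0 - Ax := by
    by_contra hfail
    push_neg at hfail
    have hdn : 0 ≤ dist xh x₀ := dist_nonneg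
    have hΔ0 : 0 ≤ A0 - Ax := by nlinarith [h1]
    have hu0 : 0 < g x₀ - g xh := by nlinarith
    have hρu : ρ * ((g x₀ - η) - g xh) ≤ A0 - Ax := by
      have hg1 : GN x₀ - GN xh ≥ (g x₀ - η) - g xh := by
        have := hGN_le xh
        have := hGN_x₀
        linarith
      nlinarith [h2]
    have hub : (ρ - r) * (g x₀ - g xh) < ρ * η := by nlinarith
    -- criticality of xh at w
    have hcw : Ax - ε * dist w xh ≤ Aw := by
      have h := hxh_crit.2 w
      rw [hcoe xh hxh_crit.1, hcoe w hwT, ← EReal.coe_sub, EReal.coe_le_coe_iff] at h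
      linarith
    have htri : dist w xh ≤ dist w x₀ + dist xh x₀ := by
      rw [dist_comm xh x₀]; exact dist_triangle w x₀ xh
    have hεd : ε * dist xh x₀ ≤ A0 - Ax := by nlinarith [h1]
    have hκle : κ ≤ 2 * (A0 - Ax) := by
      simp only [hκ]
      nlinarith
    -- numeric contradiction
    have hρr : (0:ℝ) < ρ - r := by linarith
    have heq : 2 * r * (ρ * η) = κ * (ρ - r) / 2 := by
      rw [hη]
      field_simp
      ring
    have hs1 : κ * (ρ - r) ≤ 2 * ((A0 - Ax) * (ρ - r)) := by nlinarith
    have hs2 : (A0 - Ax) * (ρ - r) < r * ((g x₀ - g xh) * (ρ - r)) := by nlinarith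
    have hs3 : r * ((g x₀ - g xh) * (ρ - r)) < r * (ρ * η) := by nlinarith
    nlinarith [mul_pos hκ0 hρr]
  refine ⟨xh, hxh_crit, ?_, ?_⟩
  · rw [hcoe xh hxh_crit.1, hcoe x₀ hx₀T, ← EReal.coe_sub, EReal.coe_le_coe_iff]
    have hdn : 0 ≤ dist xh x₀ := dist_nonneg
    linarith [h1]
  · rw [hcoe xh hxh_crit.1, hcoe x₀ hx₀T, ← EReal.coe_sub, ← EReal.coe_sub,
      EReal.coe_le_coe_iff]
    have := hsucc
    nlinarith
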